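/- arXiv:1510.04176 — 7 statements merged into one kernel-verified Lean document; each statement's English description precedes it below -/
import Mathlib

section
/- The n-fold iterated multiplicative integral of a positive continuous function f starting at a equals exp of the n-fold iterated Riemann integral of ln ∘ f: (ₐI*ⁿ f)(x) = exp((ₐIⁿ (ln∘f))(x)), where (ₐIⁿ g)(x) = (1/(n−1)!) ∫ₐˣ (x−t)^{n−1} g(t) dt. -/
open Real intervalIntegral Finset

/-- The `n`-fold iterated multiplicative integral starting at `a`. -/
noncomputable def multIntIter (a : ℝ) : ℕ → (ℝ → ℝ) → ℝ → ℝ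
  | 0, f, x => f x
  | n + 1, f, x => Real.exp (∫ t in a..x, Real.log (multIntIter a n f t))

section Aux

variable (a : ℝ) (g : ℝ → ℝ)

lemma H_hasDeriv (hg : Continuous g) (j : ℕ) (x : ℝ) :
    HasDerivAt (fun y => ∫ s in a..y, (-s) ^ j * g s) ((-x) ^ j * g x) x := by
  have hc : Continuous (fun s : ℝ => (-s) ^ j * g s) := by continuity
  exact intervalIntegral.integral_hasDerivAt_right (hc.intervalIntegrable a x)
    (hc.stronglyMeasurableAtFilter _ _) hc.continuousAt

lemma F_expand (m : ℕ) (x : ℝ) (hg : Continuous g) :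
    (∫ s in a..x, (x - s) ^ m * g s) =
      ∑ k ∈ range (m + 1),
        (m.choose k : ℝ) * (x ^ k * ∫ s in a..x, (-s) ^ (m - k) * g s) := by
  have h : ∀ s : ℝ, (x - s) ^ m * g s
      = ∑ k ∈ range (m + 1), (m.choose k : ℝ) * x ^ k * ((-s) ^ (m - k) * g s) := by
    intro s
    rw [sub_eq_add_neg, add_pow, Finset.sum_mul]
    exact Finset.sum_congr rfl fun k _ => by ring
  simp_rw [h]
  rw [intervalIntegral.integral_finset_sum]
  · exact Finset.sum_congr rfl fun k _ => by
      rw [intervalIntegral.integral_const_mul]; ring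
  · intro k _
    exact (Continuous.mul (by continuity) (by continuity)).intervalIntegrable _ _

lemma F_cont (hg : Continuous g) (m : ℕ) :
    Continuous (fun y => ∫ s in a..y, (y - s) ^ m * g s) := by
  have h : (fun y => ∫ s in a..y, (y - s) ^ m * g s)
      = fun y => ∑ k ∈ range (m + 1),
          (m.choose k : ℝ) * (y ^ k * ∫ s in a..y, (-s) ^ (m - k) * g s) := by
    funext y; exact F_expand a g m y hg
  rw [h]
  refine continuous_finset_sum _ fun k _ => Continuous.mul continuous_const ?_
  refine Continuous.mul (continuous_pow k) ?_
  exact continuous_iff_continuousAt.2 fun x => (H_hasDeriv a g hg (m - k) x).continuousAt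

lemma F_hasDeriv (hg : Continuous g) (m : ℕ) (x : ℝ) :
    HasDerivAt (fun y => ∫ s in a..y, (y - s) ^ (m + 1) * g s)
      (((m : ℝ) + 1) * ∫ s in a..x, (x - s) ^ m * g s) x := by
  have hfun : (fun y => ∫ s in a..y, (y - s) ^ (m + 1) * g s)
      = fun y => ∑ k ∈ range (m + 2),
          ((m + 1).choose k : ℝ) * (y ^ k * ∫ s in a..y, (-s) ^ (m + 1 - k) * g s) := by
    funext y; exact F_expand a g (m + 1) y hg
  rw [hfun]
  have hterm : ∀ k ∈ range (m + 2),
      HasDerivAt (fun y => ((m + 1).choose k : ℝ) *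
          (y ^ k * ∫ s in a..y, (-s) ^ (m + 1 - k) * g s))
        (((m + 1).choose k : ℝ) *
          (((k : ℝ) * x ^ (k - 1)) * (∫ s in a..x, (-s) ^ (m + 1 - k) * g s)
            + x ^ k * ((-x) ^ (m + 1 - k) * g x))) x := by
    intro k _
    exact ((hasDerivAt_pow k x).mul (H_hasDeriv a g hg _ x)).const_mul _
  have hD := HasDerivAt.fun_sum hterm
  convert hD using 1
  case e'_4 => rfl
  case e'_5 => rfl
  -- algebraic identity between the two derivative values
  have hsplit : ∑ k ∈ range (m + 2),
      ((m + 1).choose k : ℝ) *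
        (((k : ℝ) * x ^ (k - 1)) * (∫ s in a..x, (-s) ^ (m + 1 - k) * g s)
          + x ^ k * ((-x) ^ (m + 1 - k) * g x))
      = (∑ k ∈ range (m + 2), ((m + 1).choose k : ℝ) *
            (((k : ℝ) * x ^ (k - 1)) * (∫ s in a..x, (-s) ^ (m + 1 - k) * g s)))
        + (∑ k ∈ range (m + 2), ((m + 1).choose k : ℝ) *
            (x ^ k * ((-x) ^ (m + 1 - k) * g x))) := by
    rw [← Finset.sum_add_distrib]
    exact Finset.sum_congr rfl fun k _ => by ring
  rw [hsplit]
  have hzero : (∑ k ∈ range (m + 2), ((m + 1).choose k : ℝ) *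
      (x ^ k * ((-x) ^ (m + 1 - k) * g x))) = 0 := by
    have : (∑ k ∈ range (m + 2), ((m + 1).choose k : ℝ) *
        (x ^ k * ((-x) ^ (m + 1 - k) * g x)))
        = (∑ k ∈ range (m + 2), x ^ k * (-x) ^ (m + 1 - k) * ((m + 1).choose k : ℝ)) * g x := by
      rw [Finset.sum_mul]
      exact Finset.sum_congr rfl fun k _ => by ring
    rw [this, ← add_pow x (-x) (m + 1)]
    simp
  rw [hzero, add_zero]
  rw [Finset.sum_range_succ']
  simp only [Nat.cast_zero, zero_mul, mul_zero, add_zero]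
  rw [F_expand a g m x hg, Finset.mul_sum]
  refine Finset.sum_congr rfl fun j hj => ?_
  have hch : ((m : ℝ) + 1) * (m.choose j : ℝ)
      = ((m + 1).choose (j + 1) : ℝ) * ((j : ℝ) + 1) := by
    have h := Nat.add_one_mul_choose_eq m j
    exact_mod_cast congrArg (fun t : ℕ => (t : ℝ)) h
  simp only [Nat.add_sub_cancel, Nat.succ_sub_succ_eq_sub]
  push_cast
  simp only [Nat.sub_zero]
  linear_combination (x ^ j * ∫ s in a..x, (-s) ^ (m - j) * g s) * hch

lemma key_step (hg : Continuous g) (m : ℕ) (x : ℝ) :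
    (∫ t in a..x, ∫ s in a..t, (t - s) ^ m * g s)
      = (1 / ((m : ℝ) + 1)) * ∫ s in a..x, (x - s) ^ (m + 1) * g s := by
  have hderiv : ∀ t ∈ Set.uIcc a x,
      HasDerivAt (fun y => ∫ s in a..y, (y - s) ^ (m + 1) * g s)
        (((m : ℝ) + 1) * ∫ s in a..t, (t - s) ^ m * g s) t :=
    fun t _ => F_hasDeriv a g hg m t
  have hint : IntervalIntegrable
      (fun t => ((m : ℝ) + 1) * ∫ s in a..t, (t - s) ^ m * g s) MeasureTheory.volume a x :=
    (Continuous.mul continuous_const (F_cont a g hg m)).intervalIntegrable _ _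
  have h := intervalIntegral.integral_eq_sub_of_hasDerivAt hderiv hint
  rw [intervalIntegral.integral_same] at h
  rw [intervalIntegral.integral_const_mul] at h
  have hm : ((m : ℝ) + 1) ≠ 0 := by positivity
  field_simp
  linarith [h]

end Aux

theorem iterated_mult_integral_eq
    (f : ℝ → ℝ) (a b x : ℝ) (n : ℕ) (hn : 1 ≤ n)
    (hab : a < b) (hx : x ∈ Set.Icc a b)
    (hcont : ContinuousOn f (Set.Icc a b))
    (hpos : ∀ t ∈ Set.Icc a b, 0 < f t) :
    multIntIter a n f x =
      Real.exp ((1 / (Nat.factorial (n - 1) : ℝ)) *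
        ∫ t in a..x, (x - t) ^ (n - 1) * Real.log (f t)) := by
  -- continuous extension of log ∘ f to all of ℝ
  set g : ℝ → ℝ := fun t => Real.log (f (max a (min b t))) with hgdef
  have hclamp : ∀ t : ℝ, max a (min b t) ∈ Set.Icc a b := by
    intro t
    constructor
    · exact le_max_left _ _
    · exact max_le hab.le (min_le_left _ _)
  have hlogf : ContinuousOn (fun t => Real.log (f t)) (Set.Icc a b) :=
    hcont.log fun t ht => (hpos t ht).ne'
  have hgc : Continuous g := by
    have hcl : Continuous (fun t : ℝ => max a (min b t)) :=
      continuous_const.max (continuous_const.min continuous_id)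
    exact hlogf.comp_continuous hcl hclamp
  have hgeq : ∀ t ∈ Set.Icc a b, g t = Real.log (f t) := by
    intro t ht
    have h1 : min b t = t := min_eq_right ht.2
    have h2 : max a t = t := max_eq_right ht.1
    simp [hgdef, h1, h2]
  have hsub : ∀ y ∈ Set.Icc a b, Set.uIcc a y ⊆ Set.Icc a b := by
    intro y hy
    rw [Set.uIcc_of_le hy.1]
    exact Set.Icc_subset_Icc le_rfl hy.2
  have main : ∀ m : ℕ, ∀ y ∈ Set.Icc a b, multIntIter a (m + 1) f y
      = Real.exp ((1 / (m.factorial : ℝ)) * ∫ s in a..y, (y - s) ^ m * g s) := by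
    intro m
    induction m with
    | zero =>
      intro y hy
      show Real.exp (∫ t in a..y, Real.log (multIntIter a 0 f t)) = _
      have hcg : Set.EqOn (fun t => Real.log (multIntIter a 0 f t))
          (fun s => (y - s) ^ 0 * g s) (Set.uIcc a y) := by
        intro t ht
        have ht' := hsub y hy ht
        show Real.log (f t) = (y - t) ^ 0 * g t
        rw [hgeq t ht', pow_zero, one_mul]
      rw [intervalIntegral.integral_congr hcg]
      norm_num
    | succ m ih =>
      intro y hy
      show Real.exp (∫ t in a..y, Real.log (multIntIter a (m + 1) f t)) = _
      have hcg : Set.EqOn (fun t => Real.log (multIntIter a (m + 1) f t))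
          (fun t => (1 / (m.factorial : ℝ)) * ∫ s in a..t, (t - s) ^ m * g s)
          (Set.uIcc a y) := by
        intro t ht
        have ht' := hsub y hy ht
        show Real.log (multIntIter a (m + 1) f t) = _
        rw [ih t ht', Real.log_exp]
      rw [intervalIntegral.integral_congr hcg, intervalIntegral.integral_const_mul,
        key_step a g hgc m y]
      congr 1
      rw [← mul_assoc]
      congr 1
      rw [Nat.factorial_succ, Nat.cast_mul, Nat.cast_add, Nat.cast_one,
        div_mul_div_comm, one_mul, mul_comm]
  obtain ⟨m, rfl⟩ : ∃ m, n = m + 1 := ⟨n - 1, (Nat.succ_pred_eq_of_pos hn).symm⟩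
  simp only [Nat.add_sub_cancel]
  rw [main m x hx]
  congr 2
  apply intervalIntegral.integral_congr
  intro t ht
  have ht' := hsub x hx ht
  simp only
  rw [hgeq t ht']
end

section
/- For a positive continuous function f on [a, b] and 0 < α ≤ 1, applying the multiplicative conformable derivative to the multiplicative conformable integral recovers f: (*T_α^a *I_α^a f)(t) = f(t) for t ∈ (a, b). -/
open Real intervalIntegral

theorem mult_conformable_deriv_of_integral
    (f : ℝ → ℝ) (a b t α : ℝ)
    (hα : 0 < α) (hα1 : α ≤ 1) (ht : t ∈ Set.Ioo a b)
    (hcont : ContinuousOn f (Set.Icc a b))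
    (hpos : ∀ y ∈ Set.Icc a b, 0 < f y) :
    Real.exp ((t - a) ^ (1 - α) *
        deriv (fun y =>
          Real.log (Real.exp (∫ x in a..y, (x - a) ^ (α - 1) * Real.log (f x)))) t) =
      f t := by
  obtain ⟨hat, htb⟩ := ht
  have hta : 0 < t - a := by linarith
  simp only [Real.log_exp]
  set g : ℝ → ℝ := fun x => (x - a) ^ (α - 1) * Real.log (f x) with hg
  -- continuity of g on an interval around t inside (a, b)
  have hgcont : ContinuousOn g (Set.Ioo a b) := by
    apply ContinuousOn.mul
    · apply ContinuousOn.rpow_const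
      · exact (continuous_id.sub continuous_const).continuousOn
      · intro x hx
        left
        have : a < x := hx.1
        intro h; linarith [sub_eq_zero.mp h]
    · apply ContinuousOn.log
      · exact hcont.mono Set.Ioo_subset_Icc_self
      · intro x hx
        exact ne_of_gt (hpos x (Set.Ioo_subset_Icc_self hx))
  -- interval integrability of g on a..t
  have hint : IntervalIntegrable g MeasureTheory.volume a t := by
    have h1 : IntervalIntegrable (fun x => (x - a) ^ (α - 1)) MeasureTheory.volume a t := by
      have := (intervalIntegrable_rpow'
        (a := 0) (b := t - a) (r := α - 1) (by linarith)).comp_sub_right a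
      simpa using this
    have h2 : ContinuousOn (fun x => Real.log (f x)) (Set.uIcc a t) := by
      have hsub : Set.uIcc a t ⊆ Set.Icc a b := by
        rw [Set.uIcc_of_le (by linarith)]
        exact Set.Icc_subset_Icc le_rfl (le_of_lt htb)
      apply ContinuousOn.log (hcont.mono hsub)
      intro x hx
      exact ne_of_gt (hpos x (hsub hx))
    exact h1.mul_continuousOn h2
  have hct : ContinuousAt g t :=
    hgcont.continuousAt (isOpen_Ioo.mem_nhds ⟨hat, htb⟩)
  have hmeas : StronglyMeasurableAtFilter g (nhds t) MeasureTheory.volume :=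
    hgcont.stronglyMeasurableAtFilter isOpen_Ioo t ⟨hat, htb⟩
  have hderiv : HasDerivAt (fun y => ∫ x in a..y, g x) (g t) t :=
    intervalIntegral.integral_hasDerivAt_right hint hmeas hct
  rw [hderiv.deriv]
  have hkey : (t - a) ^ (1 - α) * g t = Real.log (f t) := by
    rw [hg]
    simp only
    rw [← mul_assoc, ← Real.rpow_add hta]
    norm_num
  rw [hkey, Real.exp_log (hpos t ⟨le_of_lt hat, le_of_lt htb⟩)]
end

section
/- For a positive differentiable function f on [a, b] and 0 < α ≤ 1, applying the multiplicative conformable integral to the multiplicative conformable derivative gives (*I_α^a *T_α^a f)(t) = f(t)/f(a). -/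
open Real intervalIntegral

theorem mult_conformable_integral_of_deriv
    (f : ℝ → ℝ) (a b t α : ℝ)
    (hα : 0 < α) (hα1 : α ≤ 1) (hab : a < b) (ht : t ∈ Set.Icc a b)
    (hf : ContDiffOn ℝ 1 f (Set.Icc a b))
    (hpos : ∀ y ∈ Set.Icc a b, 0 < f y) :
    Real.exp (∫ x in a..t, (x - a) ^ (α - 1) *
        Real.log (Real.exp ((x - a) ^ (1 - α) * deriv f x / f x))) =
      f t / f a := by
  obtain ⟨hat, htb⟩ := ht
  set h : ℝ → ℝ := fun x => (x - a) ^ (α - 1) *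
      Real.log (Real.exp ((x - a) ^ (1 - α) * deriv f x / f x)) with hh
  -- on Ioo a t, h x = deriv f x / f x
  have hIoo : ∀ x ∈ Set.Ioo a t, h x = deriv f x / f x := by
    intro x hx
    have hxa : (0:ℝ) < x - a := sub_pos.mpr hx.1
    simp only [hh, Real.log_exp]
    rw [mul_div_assoc, ← mul_assoc, ← Real.rpow_add hxa]
    norm_num
  have hsub : Set.Ioo a t ⊆ Set.Ioo a b := Set.Ioo_subset_Ioo le_rfl htb
  -- interior membership gives deriv = derivWithin and differentiability
  have hmem : ∀ x ∈ Set.Ioo a b, Set.Icc a b ∈ nhds x := fun x hx =>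
    Icc_mem_nhds hx.1 hx.2
  have hdiff : ∀ x ∈ Set.Ioo a b, HasDerivAt f (deriv f x) x := by
    intro x hx
    have : DifferentiableAt ℝ f x :=
      ((hf.differentiableOn one_ne_zero).differentiableAt (hmem x hx))
    exact this.hasDerivAt
  -- continuous candidate for h a.e.
  set c : ℝ → ℝ := fun x => derivWithin f (Set.Icc a b) x / f x with hc
  have hcCont : ContinuousOn c (Set.Icc a b) := by
    apply ContinuousOn.div
    · exact hf.continuousOn_derivWithin (uniqueDiffOn_Icc hab) le_rfl
    · exact hf.continuousOn
    · exact fun y hy => (hpos y hy).ne'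
  have hci : IntervalIntegrable c MeasureTheory.volume a t := by
    apply ContinuousOn.intervalIntegrable
    apply hcCont.mono
    rw [Set.uIcc_of_le hat]
    exact Set.Icc_subset_Icc le_rfl htb
  have hch : ∀ x ∈ Set.Ioo a t, c x = h x := by
    intro x hx
    rw [hIoo x hx, hc]
    simp only
    rw [derivWithin_of_mem_nhds (hmem x (hsub hx))]
  have hhi : IntervalIntegrable h MeasureTheory.volume a t := by
    rw [intervalIntegrable_iff_integrableOn_Ioo_of_le hat]
    have := (intervalIntegrable_iff_integrableOn_Ioo_of_le hat).mp hci
    exact this.congr_fun hch measurableSet_Ioo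
  -- FTC with g = log ∘ f
  have hg : ∀ x ∈ Set.Ioo a t, HasDerivWithinAt (fun y => Real.log (f y)) (h x) (Set.Ioi x) x := by
    intro x hx
    have hx' := hsub hx
    have hfx : f x ≠ 0 := (hpos x ⟨hx'.1.le, hx'.2.le⟩).ne'
    have := (hdiff x hx').log hfx
    rw [hIoo x hx]
    exact this.hasDerivWithinAt
  have hgc : ContinuousOn (fun y => Real.log (f y)) (Set.Icc a t) := by
    apply ContinuousOn.log
    · exact hf.continuousOn.mono (Set.Icc_subset_Icc le_rfl htb)
    · intro y hy
      exact (hpos y ⟨hy.1, hy.2.trans htb⟩).ne'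
  have key := integral_eq_sub_of_hasDeriv_right_of_le hat hgc hg hhi
  rw [hh] at key
  rw [key, Real.exp_sub, Real.exp_log (hpos t ⟨hat, htb⟩),
    Real.exp_log (hpos a ⟨le_rfl, hab.le⟩)]
end

section
/- For a positive continuous function f on [a, b] and 0 < α ≤ 1, the right multiplicative conformable derivative applied to the right multiplicative conformable integral recovers f: (ᵇ_α T* ᵇ_α I* f)(t) = f(t) for t ∈ (a, b). -/
open Real intervalIntegral

theorem right_mult_conformable_deriv_of_integral
    (f : ℝ → ℝ) (a b t α : ℝ)
    (hα : 0 < α) (hα1 : α ≤ 1) (ht : t ∈ Set.Ioo a b)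
    (hcont : ContinuousOn f (Set.Icc a b))
    (hpos : ∀ y ∈ Set.Icc a b, 0 < f y) :
    Real.exp (-(b - t) ^ (1 - α) *
        deriv (fun y =>
          Real.log (Real.exp (∫ x in y..b, (b - x) ^ (α - 1) * Real.log (f x)))) t) =
      f t := by
  obtain ⟨hat, htb⟩ := ht
  have hbt : (0:ℝ) < b - t := by linarith
  set g : ℝ → ℝ := fun x => (b - x) ^ (α - 1) * Real.log (f x) with hg
  -- integrability
  have h1 : IntervalIntegrable (fun x : ℝ => (b - x) ^ (α - 1)) MeasureTheory.volume t b := by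
    have := (intervalIntegral.intervalIntegrable_rpow' (a := b - b) (b := b - t)
      (r := α - 1) (by linarith)).comp_sub_left b
    simpa using this.symm
  have hsub : Set.uIcc t b ⊆ Set.Icc a b := by
    rw [Set.uIcc_of_le (le_of_lt htb)]
    exact Set.Icc_subset_Icc (le_of_lt hat) le_rfl
  have hlogc : ContinuousOn (fun x => Real.log (f x)) (Set.uIcc t b) := by
    apply ContinuousOn.log (hcont.mono hsub)
    intro x hx
    exact ne_of_gt (hpos x (hsub hx))
  have hInt : IntervalIntegrable g MeasureTheory.volume t b :=
    h1.mul_continuousOn hlogc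
  -- continuity of g near t
  have hgc : ContinuousOn g (Set.Ioo a b) := by
    apply ContinuousOn.mul
    · apply ContinuousOn.rpow_const
      · exact (continuous_const.sub continuous_id).continuousOn
      · intro x hx
        left
        have : x < b := hx.2
        intro h
        nlinarith [sub_eq_zero.mp h]
    · apply ContinuousOn.log (hcont.mono Set.Ioo_subset_Icc_self)
      intro x hx
      exact ne_of_gt (hpos x (Set.Ioo_subset_Icc_self hx))
  have hmemIoo : t ∈ Set.Ioo a b := ⟨hat, htb⟩
  have hca : ContinuousAt g t :=
    hgc.continuousAt (isOpen_Ioo.mem_nhds hmemIoo)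
  have hmeas : StronglyMeasurableAtFilter g (nhds t) MeasureTheory.volume :=
    ContinuousOn.stronglyMeasurableAtFilter isOpen_Ioo hgc t hmemIoo
  have hd : HasDerivAt (fun y => ∫ x in y..b, g x) (-g t) t :=
    intervalIntegral.integral_hasDerivAt_left hInt hmeas hca
  have hfun : (fun y =>
      Real.log (Real.exp (∫ x in y..b, (b - x) ^ (α - 1) * Real.log (f x)))) =
      fun y => ∫ x in y..b, g x := by
    funext y; rw [Real.log_exp]
  rw [hfun, hd.deriv]
  have hfpos : 0 < f t := hpos t ⟨le_of_lt hat, le_of_lt htb⟩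
  have : -(b - t) ^ (1 - α) * -g t = Real.log (f t) := by
    simp only [hg]
    rw [neg_mul_neg, ← mul_assoc, ← Real.rpow_add hbt]
    norm_num
  rw [this, Real.exp_log hfpos]
end

section
/- For a positive differentiable function f on [a, b] and 0 < α ≤ 1, the right multiplicative conformable integral of the right multiplicative conformable derivative gives (ᵇ_α I* ᵇ_α T* f)(t) = f(t)/f(b). -/
open Real intervalIntegral

theorem right_mult_conformable_integral_of_deriv
    (f : ℝ → ℝ) (a b t α : ℝ)
    (hα : 0 < α) (hα1 : α ≤ 1) (hab : a < b) (ht : t ∈ Set.Icc a b)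
    (hf : ContDiffOn ℝ 1 f (Set.Icc a b))
    (hpos : ∀ y ∈ Set.Icc a b, 0 < f y) :
    Real.exp (∫ x in t..b, (b - x) ^ (α - 1) *
        Real.log (Real.exp (-(b - x) ^ (1 - α) * deriv f x / f x))) =
      f t / f b := by
  have htb : t ≤ b := ht.2
  have hsub : Set.Icc t b ⊆ Set.Icc a b := Set.Icc_subset_Icc ht.1 le_rfl
  set F' : ℝ → ℝ := fun x => derivWithin f (Set.Icc a b) x / f x with hF'
  have hderivcont : ContinuousOn (derivWithin f (Set.Icc a b)) (Set.Icc a b) :=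
    hf.continuousOn_derivWithin (uniqueDiffOn_Icc hab) le_rfl
  have hfc : ContinuousOn f (Set.Icc a b) := hf.continuousOn
  have hF'cont : ContinuousOn F' (Set.Icc a b) :=
    hderivcont.div hfc (fun x hx => (hpos x hx).ne')
  have hdiffat : ∀ x ∈ Set.Ioo t b, DifferentiableAt ℝ f x ∧
      derivWithin f (Set.Icc a b) x = deriv f x := by
    intro x hx
    have hx' : x ∈ Set.Ioo a b := ⟨lt_of_le_of_lt ht.1 hx.1, hx.2⟩
    have hmem : Set.Icc a b ∈ nhds x := Icc_mem_nhds hx'.1 hx'.2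
    have hdiff : DifferentiableAt ℝ f x :=
      ((hf.differentiableOn one_ne_zero) x (Set.Ioo_subset_Icc_self hx')).differentiableAt hmem
    exact ⟨hdiff, hdiff.derivWithin (uniqueDiffOn_Icc hab x (Set.Ioo_subset_Icc_self hx'))⟩
  have hstep : ∀ x ∈ Set.Ioo t b, (b - x) ^ (α - 1) *
      Real.log (Real.exp (-(b - x) ^ (1 - α) * deriv f x / f x)) = -F' x := by
    intro x hx
    obtain ⟨hdiff, hdw⟩ := hdiffat x hx
    have hbx : 0 < b - x := sub_pos.mpr hx.2
    have key : (b - x) ^ (α - 1) * (b - x) ^ (1 - α) = 1 := by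
      rw [← Real.rpow_add hbx]; norm_num
    rw [Real.log_exp, hF']
    simp only [hdw]
    calc (b - x) ^ (α - 1) * (-(b - x) ^ (1 - α) * deriv f x / f x)
        = -((b - x) ^ (α - 1) * (b - x) ^ (1 - α) * deriv f x / f x) := by ring
      _ = -(deriv f x / f x) := by rw [key]; ring
  have hint : IntervalIntegrable F' MeasureTheory.volume t b := by
    apply ContinuousOn.intervalIntegrable
    apply hF'cont.mono
    rw [Set.uIcc_of_le htb]
    exact hsub
  have hftc : ∫ x in t..b, F' x = Real.log (f b) - Real.log (f t) := by
    apply intervalIntegral.integral_eq_sub_of_hasDerivAt_of_le htb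
    · exact (Real.continuousOn_log.comp (hfc.mono hsub)
        (fun x hx => Set.mem_compl_singleton_iff.mpr (hpos x (hsub hx)).ne')).congr
        (fun x hx => rfl)
    · intro x hx
      obtain ⟨hdiff, hdw⟩ := hdiffat x hx
      have := (hdiff.hasDerivAt).log (hpos x (hsub (Set.Ioo_subset_Icc_self hx))).ne'
      rw [hF']
      simpa [hdw] using this
    · exact hint
  have hcongr : (∫ x in t..b, (b - x) ^ (α - 1) *
      Real.log (Real.exp (-(b - x) ^ (1 - α) * deriv f x / f x))) =
      ∫ x in t..b, -F' x := by
    apply intervalIntegral.integral_congr_ae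
    have hb : ∀ᵐ x : ℝ ∂MeasureTheory.volume, x ≠ b := by
      refine MeasureTheory.ae_iff.mpr ?_
      simpa using MeasureTheory.measure_singleton (μ := MeasureTheory.volume) b
    filter_upwards [hb] with x hxb hx
    rw [Set.uIoc_of_le htb] at hx
    exact hstep x ⟨hx.1, lt_of_le_of_ne hx.2 hxb⟩
  rw [hcongr, intervalIntegral.integral_neg, hftc]
  rw [neg_sub, Real.exp_sub, Real.exp_log (hpos t ht), Real.exp_log (hpos b ⟨hab.le, le_rfl⟩)]
end

section
/- For α ∈ (n, n+1], β = α − n, and a positive (n+1)-times continuously differentiable function f with g = ln∘f, the higher-order multiplicative conformable integral applied to the higher-order multiplicative conformable derivative satisfies (*I_α^a *T_α^a f)(t) = f(t) / ∏_{k=0}^{n} exp(g^{(k)}(a)(t−a)^k / k!). -/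
open Real intervalIntegral Finset

lemma taylor_integral_aux (g : ℝ → ℝ) (a t : ℝ) :
    ∀ n : ℕ, ContDiff ℝ (n + 1) g →
    ∫ x in a..t, (t - x) ^ n * iteratedDeriv (n + 1) g x
      = (Nat.factorial n : ℝ) * (g t - ∑ k ∈ Finset.range (n + 1),
          iteratedDeriv k g a * (t - a) ^ k / (Nat.factorial k : ℝ)) := by
  intro n
  induction n with
  | zero =>
    intro hg
    have hdiff : Differentiable ℝ g := hg.differentiable (by norm_num)
    have hcont : Continuous (deriv g) := by
      have := hg.continuous_iteratedDeriv 1 (by norm_num)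
      rwa [iteratedDeriv_one] at this
    have : ∫ x in a..t, deriv g x = g t - g a := by
      refine intervalIntegral.integral_deriv_eq_sub (fun x _ => hdiff x) ?_
      exact (hcont.intervalIntegrable a t)
    simp only [pow_zero, one_mul, iteratedDeriv_one]
    simp [this, Finset.sum_range_one]
  | succ n ih =>
    intro hg
    set u : ℝ → ℝ := iteratedDeriv (n + 1) g with hu
    set u' : ℝ → ℝ := iteratedDeriv (n + 2) g with hu'
    set v : ℝ → ℝ := fun x => -(t - x) ^ (n + 1) with hv
    set v' : ℝ → ℝ := fun x => (n + 1 : ℝ) * (t - x) ^ n with hv'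
    have hud : ∀ x, HasDerivAt u (u' x) x := by
      intro x
      have hd : Differentiable ℝ u := by
        apply hg.differentiable_iteratedDeriv (n + 1)
        exact_mod_cast Nat.lt_succ_self (n + 1)
      have := (hd x).hasDerivAt
      rwa [show deriv u x = u' x by rw [hu', show n + 2 = (n+1) + 1 from rfl,
        iteratedDeriv_succ]] at this
    have hvd : ∀ x, HasDerivAt v (v' x) x := by
      intro x
      have h1 : HasDerivAt (fun y => t - y) (-1) x := (hasDerivAt_id x).const_sub t
      have h2 : HasDerivAt (fun y => -(t - y) ^ (n + 1))
          (-(((n + 1 : ℕ) : ℝ) * (t - x) ^ (n + 1 - 1) * -1)) x := (h1.pow (n + 1)).neg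
      convert h2 using 1
      push_cast
      ring
    have hu'i : IntervalIntegrable u' MeasureTheory.volume a t :=
      (hg.continuous_iteratedDeriv (n + 2) le_rfl).intervalIntegrable a t
    have hv'i : IntervalIntegrable v' MeasureTheory.volume a t := by
      apply Continuous.intervalIntegrable; fun_prop
    have key := intervalIntegral.integral_mul_deriv_eq_deriv_mul
      (fun x _ => hud x) (fun x _ => hvd x) hu'i hv'i
    have h1 : ∫ x in a..t, u x * v' x
        = (n + 1 : ℝ) * ∫ x in a..t, (t - x) ^ n * iteratedDeriv (n + 1) g x := by
      rw [← intervalIntegral.integral_const_mul]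
      apply intervalIntegral.integral_congr
      intro x _; simp [hv', hu]; ring
    have h2 : ∫ x in a..t, u' x * v x
        = -∫ x in a..t, (t - x) ^ (n + 1) * iteratedDeriv (n + 2) g x := by
      rw [← intervalIntegral.integral_neg]
      apply intervalIntegral.integral_congr
      intro x _; simp [hv, hu']; ring
    rw [h1, h2] at key
    have hIH := ih (hg.of_le (by exact_mod_cast Nat.le_succ (n + 1)))
    have hvt : v t = 0 := by simp [hv]
    have hva : v a = -(t - a) ^ (n + 1) := by simp [hv]
    rw [hIH, hvt, hva] at key
    have hgoal : ∫ x in a..t, (t - x) ^ (n + 1) * iteratedDeriv (n + 2) g x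
        = (n + 1 : ℝ) * ((Nat.factorial n : ℝ) * (g t - ∑ k ∈ Finset.range (n + 1),
            iteratedDeriv k g a * (t - a) ^ k / (Nat.factorial k : ℝ)))
          - iteratedDeriv (n + 1) g a * (t - a) ^ (n + 1) := by
      have := key
      nlinarith [key]
    rw [hgoal]
    conv_rhs => rw [Finset.sum_range_succ]
    have hfac : (Nat.factorial (n + 1) : ℝ) = (n + 1 : ℝ) * (Nat.factorial n : ℝ) := by
      rw [Nat.factorial_succ]; push_cast; ring
    have hfacne : (Nat.factorial (n + 1) : ℝ) ≠ 0 := by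
      exact_mod_cast Nat.factorial_ne_zero (n + 1)
    rw [hfac]
    field_simp
    ring

theorem higher_mult_conformable_integral_of_deriv
    (f : ℝ → ℝ) (a b t α β : ℝ) (n : ℕ)
    (hα : (n : ℝ) < α) (hα1 : α ≤ (n : ℝ) + 1) (hβ : β = α - n)
    (hab : a < b) (ht : t ∈ Set.Icc a b)
    (hfpos : ∀ y, 0 < f y) (hf : ContDiff ℝ (n + 1) f)
    (g : ℝ → ℝ) (hg : g = fun y => Real.log (f y)) :
    Real.exp ((1 / (Nat.factorial n : ℝ)) *
        ∫ x in a..t, (t - x) ^ n *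
          ((x - a) ^ (β - 1) *
            Real.log (Real.exp ((x - a) ^ (1 - β) * iteratedDeriv (n + 1) g x)))) =
      f t / ∏ k ∈ Finset.range (n + 1),
        Real.exp (iteratedDeriv k g a * (t - a) ^ k / (Nat.factorial k : ℝ)) := by
  have hgc : ContDiff ℝ (n + 1) g := by
    rw [hg]; exact hf.log (fun x => (hfpos x).ne')
  have hat : a ≤ t := ht.1
  have hcongr : ∫ x in a..t, (t - x) ^ n *
        ((x - a) ^ (β - 1) *
          Real.log (Real.exp ((x - a) ^ (1 - β) * iteratedDeriv (n + 1) g x)))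
      = ∫ x in a..t, (t - x) ^ n * iteratedDeriv (n + 1) g x := by
    apply intervalIntegral.integral_congr_ae
    apply Filter.Eventually.of_forall
    intro x hx
    rw [Set.uIoc_of_le hat] at hx
    have hxa : (0 : ℝ) < x - a := by linarith [hx.1]
    rw [Real.log_exp]
    have hone : (x - a) ^ (β - 1) * ((x - a) ^ (1 - β) * iteratedDeriv (n + 1) g x)
        = iteratedDeriv (n + 1) g x := by
      rw [← mul_assoc, ← Real.rpow_add hxa]
      norm_num
    rw [hone]
  rw [hcongr, taylor_integral_aux g a t n hgc]
  have hfacne : (Nat.factorial n : ℝ) ≠ 0 := by exact_mod_cast Nat.factorial_ne_zero n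
  rw [one_div, inv_mul_cancel_left₀ hfacne, Real.exp_sub, ← Real.exp_sum]
  congr 1
  rw [hg]
  exact Real.exp_log (hfpos t)
end

section
/- For 0 < α < 1 and β > 0, the left multiplicative Riemann–Liouville fractional derivative of t ↦ exp((t−a)^{β−1}) equals exp((Γ(β)/Γ(β−α))(x−a)^{β−α−1}) for x > a. -/
open Real intervalIntegral

lemma real_beta (u v : ℝ) (hu : 0 < u) (hv : 0 < v) :
    ∫ s in (0:ℝ)..1, s ^ (u - 1) * (1 - s) ^ (v - 1) =
      Real.Gamma u * Real.Gamma v / Real.Gamma (u + v) := by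
  have h := Complex.Gamma_mul_Gamma_eq_betaIntegral (s := (u : ℂ)) (t := (v : ℂ))
    (by simpa using hu) (by simpa using hv)
  have key : Complex.betaIntegral u v =
      ((∫ s in (0:ℝ)..1, s ^ (u - 1) * (1 - s) ^ (v - 1) : ℝ) : ℂ) := by
    rw [Complex.betaIntegral, ← intervalIntegral.integral_ofReal]
    apply intervalIntegral.integral_congr
    intro s hs
    rw [Set.uIcc_of_le (by norm_num)] at hs
    simp only
    rw [Complex.ofReal_mul, Complex.ofReal_cpow hs.1,
      Complex.ofReal_cpow (by linarith [hs.2])]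
    push_cast
    ring
  rw [key, ← Complex.ofReal_add, Complex.Gamma_ofReal, Complex.Gamma_ofReal,
    Complex.Gamma_ofReal, ← Complex.ofReal_mul, ← Complex.ofReal_mul] at h
  have h' := Complex.ofReal_injective h
  have hne : Real.Gamma (u + v) ≠ 0 := (Real.Gamma_pos_of_pos (by linarith)).ne'
  field_simp
  linarith [h']

lemma conv_integral (a y α β : ℝ) (hα : 0 < α) (hα1 : α < 1) (hβ : 0 < β) (hβα : α < β) (hy : a < y) :
    ∫ t in a..y, (y - t) ^ (-α) * (t - a) ^ (β - 1) =
      (y - a) ^ (β - α) * (Real.Gamma β * Real.Gamma (1 - α) / Real.Gamma (β + (1 - α))) := by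
  set c := y - a with hc
  have hc0 : 0 < c := by simp [hc]; linarith
  set B : ℝ := Real.Gamma β * Real.Gamma (1 - α) / Real.Gamma (β + (1 - α)) with hB
  have hsub := intervalIntegral.integral_comp_mul_add
    (f := fun t => (y - t) ^ (-α) * (t - a) ^ (β - 1)) (a := (0:ℝ)) (b := 1)
    (c := c) hc0.ne' a
  have h1 : c * 0 + a = a := by ring
  have h2 : c * 1 + a = y := by simp [hc]
  rw [h1, h2, smul_eq_mul] at hsub
  have hcong : ∫ s in (0:ℝ)..1, (fun t => (y - t) ^ (-α) * (t - a) ^ (β - 1)) (c * s + a) =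
      ∫ s in (0:ℝ)..1, c ^ (-α) * c ^ (β - 1) * (s ^ (β - 1) * (1 - s) ^ ((1 - α) - 1)) := by
    apply intervalIntegral.integral_congr
    intro s hs
    rw [Set.uIcc_of_le (by norm_num)] at hs
    simp only
    have e1 : y - (c * s + a) = c * (1 - s) := by rw [hc]; ring
    have e2 : c * s + a - a = c * s := by ring
    have e3 : (1:ℝ) - α - 1 = -α := by ring
    rw [e1, e2, e3, Real.mul_rpow hc0.le (by linarith [hs.2]), Real.mul_rpow hc0.le hs.1]
    ring
  rw [hcong, intervalIntegral.integral_const_mul, real_beta β (1 - α) hβ (by linarith)] at hsub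
  have h3 : (∫ t in a..y, (y - t) ^ (-α) * (t - a) ^ (β - 1)) =
      c * (c ^ (-α) * c ^ (β - 1) * B) := by
    calc (∫ t in a..y, (y - t) ^ (-α) * (t - a) ^ (β - 1))
        = c * (c⁻¹ * ∫ t in a..y, (y - t) ^ (-α) * (t - a) ^ (β - 1)) := by
          field_simp
      _ = c * (c ^ (-α) * c ^ (β - 1) * B) := by rw [← hsub, hB]
  rw [h3]
  have hpow : c * (c ^ (-α) * c ^ (β - 1)) = c ^ (β - α) := by
    rw [← Real.rpow_add hc0, ← Real.rpow_one_add' hc0.le (by intro h; linarith)]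
    ring_nf
  rw [← mul_assoc, hpow]

theorem mult_RL_deriv_of_power
    (a x α β : ℝ) (hα : 0 < α) (hα1 : α < 1) (hβ : 0 < β) (hβα : α < β) (hx : a < x) :
    Real.exp (deriv (fun y =>
        (1 / Real.Gamma (1 - α)) *
          ∫ t in a..y, (y - t) ^ (-α) * Real.log (Real.exp ((t - a) ^ (β - 1)))) x) =
      Real.exp (Real.Gamma β / Real.Gamma (β - α) * (x - a) ^ (β - α - 1)) := by
  simp_rw [Real.log_exp]
  congr 1
  set K : ℝ := Real.Gamma β * Real.Gamma (1 - α) / Real.Gamma (β + (1 - α)) with hK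
  have hev : (fun y =>
        (1 / Real.Gamma (1 - α)) * ∫ t in a..y, (y - t) ^ (-α) * (t - a) ^ (β - 1))
      =ᶠ[nhds x] fun y => (1 / Real.Gamma (1 - α)) * K * (y - a) ^ (β - α) := by
    filter_upwards [eventually_gt_nhds hx] with y hy
    rw [conv_integral a y α β hα hα1 hβ hβα hy]
    ring
  rw [hev.deriv_eq]
  have hD : HasDerivAt (fun y : ℝ => (1 / Real.Gamma (1 - α)) * K * (y - a) ^ (β - α))
      ((1 / Real.Gamma (1 - α)) * K * (1 * (β - α) * (x - a) ^ (β - α - 1))) x := by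
    exact (((hasDerivAt_id x).sub_const a).rpow_const
      (Or.inl (sub_ne_zero.mpr (by simp only [id_eq]; linarith)))).const_mul _
  have hΓ1 : Real.Gamma (1 - α) ≠ 0 := (Real.Gamma_pos_of_pos (by linarith)).ne'
  have hΓ2 : Real.Gamma (β - α) ≠ 0 := (Real.Gamma_pos_of_pos (by linarith)).ne'
  have hβα' : β - α ≠ 0 := by intro h; linarith [sub_eq_zero.mp h]
  have hrec : Real.Gamma (β + (1 - α)) = (β - α) * Real.Gamma (β - α) := by
    have h5 : β + (1 - α) = (β - α) + 1 := by ring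
    rw [h5, Real.Gamma_add_one hβα']
  have key : (1 / Real.Gamma (1 - α)) * K * (β - α) = Real.Gamma β / Real.Gamma (β - α) := by
    rw [hK, hrec]
    field_simp
  rw [hD.deriv, ← key]
  ring
end
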